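/- arXiv:1302.2220 — 2 statements merged into one kernel-verified Lean document; each statement's English description precedes it below -/
import Mathlib

section
/- Let M ⊆ ℂ^N, let S ⊆ ℂ^N be open, let σ : S → M be a retraction (σ continuous with σ(ζ) = ζ for ζ ∈ M ∩ S, σ(S) ⊆ M), and let p : X → M be a local homeomorphism. Define X̃₀ = {(x, v) ∈ X × ℂ^N : p(x) + v ∈ S and σ(p(x) + v) = p(x)} and p₀(x, v) = p(x) + v. Then p₀ : X̃₀ → ℂ^N is a local homeomorphism onto open subsets of S; more precisely, for every (x₀, v₀) ∈ X̃₀ there is an open neighborhood U of x₀ with p|_U a homeomorphism onto p(U), and then p₀ restricted to V = X̃₀ ∩ (U × ℂ^N) is a homeomorphism onto V' = σ^{-1}(p(U)), with inverse z ↦ ((p|_U)^{-1}(σ(z)), z − σ(z)). -/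
/-- Lemma 3.1: given a holomorphic-retraction-style setup σ : S → M (here only
topological data is used) and a Riemann domain p : X → M, the space
X̃₀ = {(x,v) : p(x)+v ∈ S, σ(p(x)+v) = p(x)} with p₀(x,v) = p(x)+v is a Riemann region
over ℂ^N: around each point, p₀ restricts to a homeomorphism of
V = X̃₀ ∩ (U × ℂ^N) onto the open set V' = σ⁻¹(p(U)) ⊆ S, with inverse
z ↦ ((p|_U)⁻¹(σ z), z − σ z). -/
theorem riemann_domain_over_retraction (N : ℕ)
    (M S : Set (Fin N → ℂ)) (hS : IsOpen S)
    (σ : (Fin N → ℂ) → (Fin N → ℂ))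
    (hσc : ContinuousOn σ S) (hσM : ∀ z ∈ S, σ z ∈ M) (hσret : ∀ z ∈ M ∩ S, σ z = z)
    {X : Type*} [TopologicalSpace X] [T2Space X]
    (p : X → (Fin N → ℂ)) (hpM : ∀ x, p x ∈ M) (hpc : Continuous p)
    -- p is a local homeomorphism onto open subsets of M:
    (hp : ∀ x : X, ∃ U : Set X, IsOpen U ∧ x ∈ U ∧ Set.InjOn p U ∧
      (∃ W : Set (Fin N → ℂ), IsOpen W ∧ p '' U = W ∩ M) ∧
      (∃ π : (Fin N → ℂ) → X, ContinuousOn π (p '' U) ∧ ∀ x' ∈ U, π (p x') = x')) :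
    ∀ xv : X × (Fin N → ℂ),
      xv ∈ {yw : X × (Fin N → ℂ) | p yw.1 + yw.2 ∈ S ∧ σ (p yw.1 + yw.2) = p yw.1} →
      ∃ U : Set X, IsOpen U ∧ xv.1 ∈ U ∧ Set.InjOn p U ∧
        (let X₀ : Set (X × (Fin N → ℂ)) :=
          {yw | p yw.1 + yw.2 ∈ S ∧ σ (p yw.1 + yw.2) = p yw.1}
        let p₀ : X × (Fin N → ℂ) → (Fin N → ℂ) := fun yw => p yw.1 + yw.2
        let V : Set (X × (Fin N → ℂ)) := X₀ ∩ (U ×ˢ Set.univ)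
        let V' : Set (Fin N → ℂ) := {z ∈ S | σ z ∈ p '' U}
        IsOpen V' ∧ Set.BijOn p₀ V V' ∧ ContinuousOn p₀ V ∧
          ∃ ρ : (Fin N → ℂ) → X × (Fin N → ℂ),
            ContinuousOn ρ V' ∧ Set.MapsTo ρ V' V ∧
            (∀ z ∈ V', p₀ (ρ z) = z) ∧ (∀ yw ∈ V, ρ (p₀ yw) = yw)) := by

  rintro ⟨x₀, v₀⟩ ⟨hxS, hxσ⟩
  obtain ⟨U, hUopen, hxU, hUinj, ⟨W, hWopen, hWU⟩, ⟨π, hπc, hπinv⟩⟩ := hp x₀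
  refine ⟨U, hUopen, hxU, hUinj, ?_, ?_, ?_, ?_⟩
  · -- IsOpen V'
    have : {z ∈ S | σ z ∈ p '' U} = S ∩ σ ⁻¹' W := by
      ext z
      simp only [Set.mem_setOf_eq, Set.mem_inter_iff, Set.mem_preimage, hWU]
      exact ⟨fun ⟨h1, h2, _⟩ => ⟨h1, h2⟩, fun ⟨h1, h2⟩ => ⟨h1, h2, hσM z h1⟩⟩
    rw [this]
    exact hσc.isOpen_inter_preimage hS hWopen
  · -- BijOn
    constructor
    · rintro ⟨y, w⟩ ⟨⟨h1, h2⟩, hyU, -⟩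
      exact ⟨h1, h2 ▸ ⟨y, hyU, rfl⟩⟩
    constructor
    · rintro ⟨y1, w1⟩ ⟨⟨-, h2⟩, hy1, -⟩ ⟨y2, w2⟩ ⟨⟨-, h2'⟩, hy2, -⟩ heq
      simp only at heq
      have hy : y1 = y2 := hUinj hy1 hy2 (by rw [← h2, ← h2', heq])
      have : w1 = w2 := by
        have := heq
        rw [hy] at this
        exact add_left_cancel this
      simp [hy, this]
    · rintro z ⟨hzS, y, hyU, hyz⟩
      have key : p y + (z - σ z) = z := by rw [hyz]; abel
      exact ⟨(y, z - σ z), ⟨⟨by rw [key]; exact hzS, by rw [key, hyz]⟩, hyU, trivial⟩, key⟩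
  · -- ContinuousOn p₀
    exact ((hpc.comp continuous_fst).add continuous_snd).continuousOn
  · -- inverse ρ
    refine ⟨fun z => (π (σ z), z - σ z), ?_, ?_, ?_, ?_⟩
    · have hc1 : ContinuousOn (fun z => π (σ z)) {z ∈ S | σ z ∈ p '' U} := by
        apply hπc.comp (hσc.mono (fun z hz => hz.1))
        exact fun z hz => hz.2
      exact hc1.prodMk (continuousOn_id.sub (hσc.mono (fun z (hz : z ∈ {z ∈ S | σ z ∈ p '' U}) => hz.1)))
    · rintro z ⟨hzS, y, hyU, hyz⟩
      have hπz : π (σ z) = y := by rw [← hyz]; exact hπinv y hyU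
      have key : p (π (σ z)) + (z - σ z) = z := by rw [hπz, hyz]; abel
      refine ⟨⟨by rw [key]; exact hzS, ?_⟩, show π (σ z) ∈ U from hπz ▸ hyU, trivial⟩
      show σ (p (π (σ z)) + (z - σ z)) = p (π (σ z))
      rw [key, hπz, hyz]
    · rintro z ⟨hzS, y, hyU, hyz⟩
      show p (π (σ z)) + (z - σ z) = z
      rw [← hyz, hπinv y hyU, hyz]; abel
    · rintro ⟨y, w⟩ ⟨⟨h1, h2⟩, hyU, -⟩
      simp only [h2, hπinv y hyU, add_sub_cancel_left]
end

section
/- Let f be holomorphic on Y₀ = {z ∈ ℂ^{n+1} : Σ z_j² = 0} \ {0} (n ≥ 2). Define, for w ∈ ℂⁿ with w₁² + ⋯ + wₙ² ≠ 0, B(w) = −(f(w, r(w)) + f(w, −r(w))) and C(w) = f(w, r(w))·f(w, −r(w)), where r(w) is either square root of −(w₁² + ⋯ + wₙ²). Then B and C are well-defined (independent of the choice of square root) and holomorphic on {w ∈ ℂⁿ : w₁² + ⋯ + wₙ² ≠ 0}. -/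
open Complex Finset

private lemma root_cases {r r' c : ℂ} (h : r ^ 2 = c) (h' : r' ^ 2 = c) :
    r' = r ∨ r' = -r := by
  have hz : (r' - r) * (r' + r) = 0 := by linear_combination h' - h
  rcases mul_eq_zero.1 hz with hz | hz
  · exact Or.inl (sub_eq_zero.1 hz)
  · exact Or.inr (eq_neg_of_add_eq_zero_left hz)

private lemma pair_eq {n : ℕ} (f : (Fin (n + 1) → ℂ) → ℂ) (w : Fin n → ℂ) {c : ℂ}
    {r r' : ℂ} (hr : r ^ 2 = c) (hr' : r' ^ 2 = c) :
    -(f (Fin.snoc w r) + f (Fin.snoc w (-r)))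
        = -(f (Fin.snoc w r') + f (Fin.snoc w (-r'))) ∧
      f (Fin.snoc w r) * f (Fin.snoc w (-r))
        = f (Fin.snoc w r') * f (Fin.snoc w (-r')) := by
  rcases root_cases hr hr' with h | h <;> subst h <;>
    simp [neg_neg, add_comm, mul_comm]

private lemma sum_snoc_sq {n : ℕ} (w : Fin n → ℂ) (r : ℂ) :
    ∑ j, (Fin.snoc w r : Fin (n + 1) → ℂ) j ^ 2 = (∑ j, w j ^ 2) + r ^ 2 := by
  rw [Fin.sum_univ_castSucc]; simp

private lemma snoc_mem {n : ℕ} {w : Fin n → ℂ} {r : ℂ}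
    (hr : r ^ 2 = -(∑ j, w j ^ 2)) (hS : (∑ j, w j ^ 2) ≠ 0) :
    (Fin.snoc w r : Fin (n + 1) → ℂ) ∈
      {z : Fin (n + 1) → ℂ | (∑ j, z j ^ 2) = 0 ∧ z ≠ 0} := by
  constructor
  · rw [sum_snoc_sq, hr]; ring
  · intro h
    have hr0 : r = 0 := by
      have := congrFun h (Fin.last n)
      simpa using this
    rw [hr0] at hr
    simp at hr
    exact hS hr

private lemma diffS {n : ℕ} : Differentiable ℂ (fun w : Fin n → ℂ => ∑ j, w j ^ 2) := by
  apply Differentiable.fun_sum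
  intro j _
  exact (differentiable_apply j).pow 2

/-- A function is holomorphic on a (not necessarily open) set `A ⊆ ℂ^m` if near every
point of `A` it extends to a holomorphic function on an ambient open neighborhood. -/
def HolomorphicOnSubset {m : ℕ} (f : (Fin m → ℂ) → ℂ) (A : Set (Fin m → ℂ)) : Prop :=
  ∀ z ∈ A, ∃ U : Set (Fin m → ℂ), IsOpen U ∧ z ∈ U ∧
    ∃ F : (Fin m → ℂ) → ℂ, DifferentiableOn ℂ F U ∧ Set.EqOn f F (U ∩ A)

private lemma key {n : ℕ} (f : (Fin (n + 1) → ℂ) → ℂ)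
    (hf : HolomorphicOnSubset f {z : Fin (n + 1) → ℂ | (∑ j, z j ^ 2) = 0 ∧ z ≠ 0})
    (op : ℂ → ℂ → ℂ) (hop : Differentiable ℂ (fun p : ℂ × ℂ => op p.1 p.2))
    (g : (Fin n → ℂ) → ℂ)
    (hg : ∀ w : Fin n → ℂ, (∑ j, w j ^ 2) ≠ 0 → ∀ r : ℂ, r ^ 2 = -(∑ j, w j ^ 2) →
      g w = op (f (Fin.snoc w r)) (f (Fin.snoc w (-r)))) :
    DifferentiableOn ℂ g {w : Fin n → ℂ | (∑ j, w j ^ 2) ≠ 0} := by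
  intro w₀ hw₀
  set S : (Fin n → ℂ) → ℂ := fun w => ∑ j, w j ^ 2 with hSdef
  have hS0 : S w₀ ≠ 0 := hw₀
  set r₀ : ℂ := Complex.exp (Complex.log (-(S w₀)) / 2) with hr₀def
  have h2cast : ∀ x : ℂ, ((2 : ℕ) : ℂ) * (x / 2) = x := by intro x; push_cast; ring
  have hr₀ : r₀ ^ 2 = -(S w₀) := by
    rw [hr₀def, ← Complex.exp_nat_mul, h2cast, Complex.exp_log (neg_ne_zero.2 hS0)]
  set ρ : (Fin n → ℂ) → ℂ := fun w => r₀ * Complex.exp (Complex.log (S w / S w₀) / 2)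
    with hρdef
  have hρsq : ∀ w : Fin n → ℂ, S w ≠ 0 → (ρ w) ^ 2 = -(S w) := by
    intro w hw
    have hexp : Complex.exp (Complex.log (S w / S w₀) / 2) ^ 2
        = Complex.exp (Complex.log (S w / S w₀)) := by
      rw [← Complex.exp_nat_mul, h2cast]
    have : ρ w ^ 2 = r₀ ^ 2 * Complex.exp (Complex.log (S w / S w₀)) := by
      show (r₀ * Complex.exp (Complex.log (S w / S w₀) / 2)) ^ 2 = _
      rw [mul_pow, hexp]
    rw [this, hr₀, Complex.exp_log (div_ne_zero hw hS0)]
    field_simp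
  set W : Set (Fin n → ℂ) :=
    {w | S w / S w₀ ∈ Complex.slitPlane} ∩ {w | S w ≠ 0} with hWdef
  have hWopen : IsOpen W := by
    apply IsOpen.inter
    · exact Complex.isOpen_slitPlane.preimage ((diffS.continuous).div_const _)
    · exact isOpen_compl_singleton.preimage diffS.continuous
  have hρdiffW : ∀ w ∈ W, DifferentiableAt ℂ ρ w := by
    intro w hw
    have hdS : DifferentiableAt ℂ S w := diffS w
    have hd1 : DifferentiableAt ℂ (fun w => S w / S w₀) w := by
      simp only [div_eq_mul_inv]
      exact hdS.mul_const _
    have hd2 : DifferentiableAt ℂ (fun w => Complex.log (S w / S w₀)) w :=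
      hd1.clog hw.1
    have hd3 : DifferentiableAt ℂ (fun w => Complex.log (S w / S w₀) / 2) w := by
      simp only [div_eq_mul_inv]
      exact hd2.mul_const _
    have hd4 : DifferentiableAt ℂ (fun w => Complex.exp (Complex.log (S w / S w₀) / 2)) w :=
      hd3.cexp
    exact hd4.const_mul r₀
  set zp : (Fin n → ℂ) → (Fin (n + 1) → ℂ) := fun w => Fin.snoc w (ρ w) with hzpdef
  set zm : (Fin n → ℂ) → (Fin (n + 1) → ℂ) := fun w => Fin.snoc w (-(ρ w)) with hzmdef
  have hzp : DifferentiableOn ℂ zp W := by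
    rw [differentiableOn_pi]
    intro i
    induction i using Fin.lastCases with
    | last =>
        simp only [hzpdef, Fin.snoc_last]
        exact fun w hw => (hρdiffW w hw).differentiableWithinAt
    | cast j =>
        simp only [hzpdef, Fin.snoc_castSucc]
        exact (differentiable_apply j).differentiableOn
  have hzm : DifferentiableOn ℂ zm W := by
    rw [differentiableOn_pi]
    intro i
    induction i using Fin.lastCases with
    | last =>
        simp only [hzmdef, Fin.snoc_last]
        exact fun w hw => (hρdiffW w hw).neg.differentiableWithinAt
    | cast j =>
        simp only [hzmdef, Fin.snoc_castSucc]
        exact (differentiable_apply j).differentiableOn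
  have hrm₀ : (-r₀) ^ 2 = -(S w₀) := by rw [neg_sq]; exact hr₀
  obtain ⟨Up, hUpo, hUpm, Fp, hFp, hEqp⟩ := hf _ (snoc_mem hr₀ hS0)
  obtain ⟨Um, hUmo, hUmm, Fm, hFm, hEqm⟩ := hf _ (snoc_mem hrm₀ hS0)
  set V : Set (Fin n → ℂ) := (W ∩ zp ⁻¹' Up) ∩ zm ⁻¹' Um with hVdef
  have hV1open : IsOpen (W ∩ zp ⁻¹' Up) :=
    hzp.continuousOn.isOpen_inter_preimage hWopen hUpo
  have hVopen : IsOpen V := by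
    have := (hzm.continuousOn.mono Set.inter_subset_left).isOpen_inter_preimage
      hV1open hUmo
    exact this
  have hρw₀ : ρ w₀ = r₀ := by
    rw [hρdef]
    simp [div_self hS0, Complex.log_one]
  have hw₀W : w₀ ∈ W := by
    refine ⟨?_, hS0⟩
    show S w₀ / S w₀ ∈ Complex.slitPlane
    rw [div_self hS0]
    exact Complex.one_mem_slitPlane
  have hw₀V : w₀ ∈ V := by
    refine ⟨⟨hw₀W, ?_⟩, ?_⟩
    · show zp w₀ ∈ Up
      rw [hzpdef]; simp only [hρw₀]; exact hUpm
    · show zm w₀ ∈ Um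
      rw [hzmdef]; simp only [hρw₀]; exact hUmm
  have hVW : V ⊆ W := fun w hw => hw.1.1
  set G : (Fin n → ℂ) → ℂ := fun w => op (Fp (zp w)) (Fm (zm w)) with hGdef
  have hGdiff : DifferentiableOn ℂ G V := by
    have h1 : DifferentiableOn ℂ (fun w => Fp (zp w)) V :=
      hFp.comp (hzp.mono hVW) (fun w hw => hw.1.2)
    have h2 : DifferentiableOn ℂ (fun w => Fm (zm w)) V :=
      hFm.comp (hzm.mono hVW) (fun w hw => hw.2)
    exact hop.comp_differentiableOn (h1.prodMk h2)
  have hEq : Set.EqOn g G V := by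
    intro w hw
    have hSw : S w ≠ 0 := hw.1.1.2
    have hsq := hρsq w hSw
    have hmsq : (-(ρ w)) ^ 2 = -(S w) := by rw [neg_sq]; exact hsq
    have h1 : f (zp w) = Fp (zp w) := hEqp ⟨hw.1.2, snoc_mem hsq hSw⟩
    have h2 : f (zm w) = Fm (zm w) := hEqm ⟨hw.2, snoc_mem hmsq hSw⟩
    have h1' : f (Fin.snoc w (ρ w)) = Fp (Fin.snoc w (ρ w)) := h1
    have h2' : f (Fin.snoc w (-(ρ w))) = Fm (Fin.snoc w (-(ρ w))) := h2
    calc g w = op (f (Fin.snoc w (ρ w))) (f (Fin.snoc w (-(ρ w)))) :=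
          hg w hSw (ρ w) hsq
      _ = op (Fp (Fin.snoc w (ρ w))) (Fm (Fin.snoc w (-(ρ w)))) := by
          rw [h1', h2']
      _ = G w := rfl
  have hGat : DifferentiableAt ℂ G w₀ :=
    (hGdiff w₀ hw₀V).differentiableAt (hVopen.mem_nhds hw₀V)
  have : DifferentiableAt ℂ g w₀ :=
    hGat.congr_of_eventuallyEq
      (Filter.eventuallyEq_of_mem (hVopen.mem_nhds hw₀V) hEq)
  exact this.differentiableWithinAt

/-- For f holomorphic on the punctured quadric cone Y₀ (n ≥ 2), the symmetric
functions B(w) = −(f(w,r) + f(w,−r)) and C(w) = f(w,r)·f(w,−r), where r² = −Σw_j²,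
are independent of the choice of the square root r and holomorphic on
{w ∈ ℂⁿ : Σ w_j² ≠ 0}. -/
theorem symmetric_functions_welldefined_holomorphic (n : ℕ) (hn : 2 ≤ n)
    (f : (Fin (n + 1) → ℂ) → ℂ)
    (hf : HolomorphicOnSubset f {z : Fin (n + 1) → ℂ | (∑ j, z j ^ 2) = 0 ∧ z ≠ 0}) :
    (∀ w : Fin n → ℂ, (∑ j, w j ^ 2) ≠ 0 →
      ∀ r r' : ℂ, r ^ 2 = -(∑ j, w j ^ 2) → r' ^ 2 = -(∑ j, w j ^ 2) →
        (-(f (Fin.snoc w r) + f (Fin.snoc w (-r)))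
          = -(f (Fin.snoc w r') + f (Fin.snoc w (-r'))) ∧
         f (Fin.snoc w r) * f (Fin.snoc w (-r))
          = f (Fin.snoc w r') * f (Fin.snoc w (-r')))) ∧
    (∃ B C : (Fin n → ℂ) → ℂ,
      DifferentiableOn ℂ B {w : Fin n → ℂ | (∑ j, w j ^ 2) ≠ 0} ∧
      DifferentiableOn ℂ C {w : Fin n → ℂ | (∑ j, w j ^ 2) ≠ 0} ∧
      ∀ w : Fin n → ℂ, (∑ j, w j ^ 2) ≠ 0 →
        ∀ r : ℂ, r ^ 2 = -(∑ j, w j ^ 2) →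
          B w = -(f (Fin.snoc w r) + f (Fin.snoc w (-r))) ∧
          C w = f (Fin.snoc w r) * f (Fin.snoc w (-r))) := by
  constructor
  · intro w _ r r' hr hr'
    exact pair_eq f w hr hr'
  · set s : (Fin n → ℂ) → ℂ :=
      fun w => Complex.exp (Complex.log (-(∑ j, w j ^ 2)) / 2) with hsdef
    have h2cast : ∀ x : ℂ, ((2 : ℕ) : ℂ) * (x / 2) = x := by intro x; push_cast; ring
    have hs : ∀ w : Fin n → ℂ, (∑ j, w j ^ 2) ≠ 0 → (s w) ^ 2 = -(∑ j, w j ^ 2) := by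
      intro w hw
      rw [hsdef, ← Complex.exp_nat_mul, h2cast, Complex.exp_log (neg_ne_zero.2 hw)]
    refine ⟨fun w => -(f (Fin.snoc w (s w)) + f (Fin.snoc w (-(s w)))),
      fun w => f (Fin.snoc w (s w)) * f (Fin.snoc w (-(s w))), ?_, ?_, ?_⟩
    · exact key f hf (fun a b => -(a + b)) (by fun_prop) _
        (fun w hw r hr => (pair_eq f w (hs w hw) hr).1)
    · exact key f hf (fun a b => a * b) (by fun_prop) _
        (fun w hw r hr => (pair_eq f w (hs w hw) hr).2)
    · intro w hw r hr
      exact pair_eq f w (hs w hw) hr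
end
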